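/- For a set of binary trees T over the same leaf set and any leaf ordering σ, the Hamming OLA distance d_σ(T) (the number of indices at which at least two of the OLA vectors differ) can be strictly smaller than the reticulation number |MAAF(T)| - 1; i.e., there exist two trees T_1, T_2 on 6 leaves and an ordering σ with d_σ(T_1,T_2) < |MAAF(T_1,T_2)| - 1. -/

import Mathlib

open scoped Classical

namespace OLA

/-- Rooted binary phylogenetic trees with `ℕ`-labeled leaves. -/
inductive BTree where
  | leaf (x : ℕ)
  | node (l r : BTree)
deriving DecidableEq

namespace BTree

def leafList : BTree → List ℕ
  | .leaf x => [x]
  | .node l r => leafList l ++ leafList r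

def leafSet (t : BTree) : Finset ℕ := t.leafList.toFinset

/-- `t` is a phylogenetic tree on the leaf set `{0, …, n-1}`. -/
def IsPhylo (t : BTree) (n : ℕ) : Prop :=
  t.leafList.Nodup ∧ t.leafSet = Finset.range n

def minLeaf : BTree → ℕ
  | .leaf x => x
  | .node l r => min (minLeaf l) (minLeaf r)

/-- OLA index of the root of a (sub)tree: leaf label, or minus the second
smallest of the minimal leaves of the two children. -/
def idx : BTree → ℤ
  | .leaf x => (x : ℤ)
  | .node l r => -(max (minLeaf l) (minLeaf r) : ℤ)

/-- Restriction `T^i` of `t` to the leaves labeled `≤ i` (suppressing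
degree-2 nodes); `none` if no such leaf exists. -/
def restrictLe : BTree → ℕ → Option BTree
  | .leaf x, i => if x ≤ i then some (.leaf x) else none
  | .node l r, i =>
    match restrictLe l i, restrictLe r i with
    | some l', some r' => some (.node l' r')
    | some l', none => some l'
    | none, some r' => some r'
    | none, none => none

/-- Restriction `T|_S` of `t` to the leaves in `S` (suppressing degree-2 nodes). -/
def restrictTo : BTree → Finset ℕ → Option BTree
  | .leaf x, S => if x ∈ S then some (.leaf x) else none
  | .node l r, S =>
    match restrictTo l S, restrictTo r S with
    | some l', some r' => some (.node l' r')
    | some l', none => some l'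
    | none, some r' => some r'
    | none, none => none

/-- OLA index of the sibling of the leaf labeled `i`, if it exists. -/
def siblingIdx : BTree → ℕ → Option ℤ
  | .leaf _, _ => none
  | .node l r, i =>
    if l = .leaf i then some r.idx
    else if r = .leaf i then some l.idx
    else (siblingIdx l i).orElse (fun _ => siblingIdx r i)

/-- The OLA vector entry of `t` at position `i ≥ 1`: the index of the sibling
of leaf `i` in the restriction of `t` to leaves `0, …, i`. -/
def olaEntry (t : BTree) (i : ℕ) : ℤ :=
  ((t.restrictLe i).bind (fun t' => t'.siblingIdx i)).getD 0

def relabel (f : ℕ → ℕ) : BTree → BTree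
  | .leaf x => .leaf (f x)
  | .node l r => .node (relabel f l) (relabel f r)

/-- The set of clusters (leaf sets of rooted subtrees) of `t`.  Two leaf-labeled
trees over the same leaf set are isomorphic iff their cluster sets coincide. -/
def clusters : BTree → Set (Set ℕ)
  | .leaf x => {{x}}
  | .node l r => insert {y | y ∈ (node l r).leafList} (clusters l ∪ clusters r)

def subtreeAt : BTree → List Bool → Option BTree
  | t, [] => some t
  | .leaf _, _ :: _ => none
  | .node l _, false :: p => subtreeAt l p
  | .node _ r, true :: p => subtreeAt r p

/-- `w` occurs as a rooted subtree (i.e. the subtree below a node) of `t`. -/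
def IsNode (t w : BTree) : Prop := ∃ p, t.subtreeAt p = some w

/-- The position of the least common ancestor of the leaves in `S`. -/
def lcaPos : BTree → Finset ℕ → List Bool
  | .leaf _, _ => []
  | .node l r, S =>
    if S ⊆ l.leafSet then false :: lcaPos l S
    else if S ⊆ r.leafSet then true :: lcaPos r S
    else []

/-- Positions of the nodes of the minimal spanning subtree `T(S)`. -/
def spanNodes (t : BTree) (S : Finset ℕ) : Set (List Bool) :=
  {p | t.lcaPos S <+: p ∧ ∃ u, t.subtreeAt p = some u ∧ ∃ x ∈ S, x ∈ u.leafList}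

end BTree

/-- OLA vector of tree `t` under the leaf ordering `σ` (leaf `x` is the
`σ x`-th leaf in the order). -/
def ola (t : BTree) (σ : Equiv.Perm ℕ) (i : ℕ) : ℤ :=
  (t.relabel σ).olaEntry i

/-- `σ` is a valid leaf ordering of the leaf set `{0, …, n-1}`. -/
def IsOrdering (σ : Equiv.Perm ℕ) (n : ℕ) : Prop := ∀ x < n, σ x < n

/-- The set of (corrected) mismatched indices among `{1, …, i}` of a family of
OLA vectors: an index is mismatched if two of the vectors differ there, or if
all vectors place that leaf above the internal node created by an
already-mismatched leaf. -/
noncomputable def mismatch {ι : Type*} (v : ι → ℕ → ℤ) : ℕ → Finset ℕ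
  | 0 => ∅
  | i + 1 =>
    let M := mismatch v i
    if (∃ a b : ι, v a (i+1) ≠ v b (i+1)) ∨ (∃ j ∈ M, ∀ a : ι, v a (i+1) = -(j : ℤ))
    then insert (i+1) M else M

/-- Corrected OLA distance of a family of OLA vectors of trees on `n` leaves. -/
noncomputable def corrDist {ι : Type*} (v : ι → ℕ → ℤ) (n : ℕ) : ℕ :=
  (mismatch v (n-1)).card

/-- Hamming OLA distance: the number of indices where at least two vectors differ. -/
noncomputable def hamDist {ι : Type*} (v : ι → ℕ → ℤ) (n : ℕ) : ℕ :=
  ((Finset.Icc 1 (n-1)).filter fun i => ∃ a b : ι, v a i ≠ v b i).card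

/-- `comp` is an agreement forest for the trees `ts` over leaf set `{0,…,n-1}`:
components have pairwise disjoint leaf sets partitioning the full leaf set,
each tree restricted to a component's leaves is isomorphic to the component,
and the spanning subtrees are node-disjoint in each tree. -/
def IsAF {ι : Type*} (ts : ι → BTree) (n : ℕ) {f : ℕ} (comp : Fin f → BTree) : Prop :=
  (∀ i, (comp i).leafList.Nodup) ∧
  (∀ i j, i ≠ j → Disjoint (comp i).leafSet (comp j).leafSet) ∧
  (Finset.univ.biUnion (fun i => (comp i).leafSet) = Finset.range n) ∧
  (∀ a i, ∃ c, (ts a).restrictTo (comp i).leafSet = some c ∧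
      c.clusters = (comp i).clusters) ∧
  (∀ a i j, i ≠ j →
      Disjoint (BTree.spanNodes (ts a) ((comp i).leafSet))
               (BTree.spanNodes (ts a) ((comp j).leafSet)))

/-- Edge of the inheritance graph: some tree has a directed path from the root
of the spanning subtree of component `i` down to that of component `j`. -/
def inhEdge {ι : Type*} (ts : ι → BTree) {f : ℕ} (comp : Fin f → BTree)
    (i j : Fin f) : Prop :=
  i ≠ j ∧ ∃ a, (BTree.lcaPos (ts a) ((comp i).leafSet)) <+:
      (BTree.lcaPos (ts a) ((comp j).leafSet))

/-- `comp` is an acyclic agreement forest for `ts`. -/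
def IsAAF {ι : Type*} (ts : ι → BTree) (n : ℕ) {f : ℕ} (comp : Fin f → BTree) : Prop :=
  IsAF ts n comp ∧ ∀ i, ¬ Relation.TransGen (inhEdge ts comp) i i

/-- Size of a maximum acyclic agreement forest (an AAF with fewest components). -/
noncomputable def maafSize {ι : Type*} (ts : ι → BTree) (n : ℕ) : ℕ :=
  sInf {f | ∃ comp : Fin f → BTree, IsAAF ts n comp}

end OLA
set_option linter.dupNamespace false

namespace OLA
namespace BTree

/-- Computable cluster sets as a `Finset` of `Finset`s. -/
def clustersF : BTree → Finset (Finset ℕ)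
  | .leaf x => {{x}}
  | .node l r => insert (leafList (.node l r)).toFinset (clustersF l ∪ clustersF r)

lemma clusters_eq (t : BTree) :
    t.clusters = (fun s : Finset ℕ => (↑s : Set ℕ)) '' ↑(clustersF t) := by
  induction t with
  | leaf x => simp [clusters, clustersF]
  | node l r ihl ihr =>
      rw [clusters, clustersF, Finset.coe_insert, Set.image_insert_eq, Finset.coe_union,
        Set.image_union, ihl, ihr]
      congr 1
      ext y; simp

lemma clustersF_eq_of_clusters {c₁ c₂ : BTree} (h : c₁.clusters = c₂.clusters) :
    clustersF c₁ = clustersF c₂ := by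
  rw [clusters_eq, clusters_eq] at h
  exact Finset.coe_injective (Finset.coe_injective.image_injective h)

def allPos : BTree → List (List Bool)
  | .leaf _ => [[]]
  | .node l r => [] :: ((allPos l).map (List.cons false) ++ (allPos r).map (List.cons true))

lemma mem_allPos {t u : BTree} {p : List Bool} (h : t.subtreeAt p = some u) :
    p ∈ allPos t := by
  induction t generalizing p with
  | leaf x =>
      cases p with
      | nil => simp [allPos]
      | cons b q => simp [subtreeAt] at h
  | node l r ihl ihr =>
      cases p with
      | nil => simp [allPos]
      | cons b q =>
          cases b
          · have : q ∈ allPos l := ihl h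
            simp only [allPos, List.mem_cons, List.mem_append, List.mem_map]
            exact Or.inr (Or.inl ⟨q, this, rfl⟩)
          · have : q ∈ allPos r := ihr h
            simp only [allPos, List.mem_cons, List.mem_append, List.mem_map]
            exact Or.inr (Or.inr ⟨q, this, rfl⟩)

def spanList (t : BTree) (S : Finset ℕ) : List (List Bool) :=
  (allPos t).filter fun p =>
    decide (t.lcaPos S <+: p) &&
      (match t.subtreeAt p with
       | some u => u.leafList.any fun x => decide (x ∈ S)
       | none => false)

lemma mem_spanList {t : BTree} {S : Finset ℕ} {p : List Bool} :
    p ∈ spanList t S ↔ p ∈ spanNodes t S := by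
  simp only [spanList, List.mem_filter, spanNodes, Set.mem_setOf_eq, Bool.and_eq_true,
    decide_eq_true_eq]
  constructor
  · rintro ⟨hmem, hpre, hrest⟩
    refine ⟨hpre, ?_⟩
    cases hu : t.subtreeAt p with
    | none => rw [hu] at hrest; simp at hrest
    | some u =>
        rw [hu] at hrest
        simp only [List.any_eq_true, decide_eq_true_eq] at hrest
        obtain ⟨x, hx, hxS⟩ := hrest
        exact ⟨u, rfl, x, hxS, hx⟩
  · rintro ⟨hpre, u, hu, x, hxS, hx⟩
    refine ⟨mem_allPos hu, hpre, ?_⟩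
    rw [hu]
    simp only [List.any_eq_true, decide_eq_true_eq]
    exact ⟨x, hx, hxS⟩

def goodB (t₁ t₂ : BTree) (S : Finset ℕ) : Bool :=
  match t₁.restrictTo S, t₂.restrictTo S with
  | some c₁, some c₂ => clustersF c₁ = clustersF c₂
  | _, _ => false

def disjB (l₁ l₂ : List (List Bool)) : Bool := l₁.all fun p => !(decide (p ∈ l₂))

lemma disjB_of_disjoint {t : BTree} {S S' : Finset ℕ}
    (h : Disjoint (spanNodes t S) (spanNodes t S')) :
    disjB (spanList t S) (spanList t S') = true := by
  simp only [disjB, List.all_eq_true, Bool.not_eq_true', decide_eq_false_iff_not]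
  intro p hp hp'
  exact Set.disjoint_left.mp h (mem_spanList.mp hp) (mem_spanList.mp hp')

def edgeB (t₁ t₂ : BTree) (S S' : Finset ℕ) : Bool :=
  decide (t₁.lcaPos S <+: t₁.lcaPos S') || decide (t₂.lcaPos S <+: t₂.lcaPos S')

lemma exists_of_edgeB {t₁ t₂ : BTree} {S S' : Finset ℕ} (h : edgeB t₁ t₂ S S' = true) :
    ∃ a : Fin 2, (![t₁, t₂] a).lcaPos S <+: (![t₁, t₂] a).lcaPos S' := by
  simp only [edgeB, Bool.or_eq_true, decide_eq_true_eq] at h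
  rcases h with h | h
  · exact ⟨0, h⟩
  · exact ⟨1, h⟩

lemma relabel_id (t : BTree) : relabel id t = t := by
  induction t <;> simp [relabel, *]

end BTree

open BTree

def exT₁ : BTree :=
  .node (.leaf 0) (.node (.leaf 1) (.node (.leaf 2)
    (.node (.node (.leaf 3) (.leaf 4)) (.leaf 5))))

def exT₂ : BTree :=
  .node (.leaf 0) (.node (.leaf 1) (.node (.node (.node (.leaf 2) (.leaf 4)) (.leaf 5))
    (.leaf 3)))

set_option maxRecDepth 100000 in
lemma master : ∀ S ∈ (Finset.range 6).powerset,
    goodB exT₁ exT₂ S = true → goodB exT₁ exT₂ (Finset.range 6 \ S) = true →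
    disjB (spanList exT₁ S) (spanList exT₁ (Finset.range 6 \ S)) = true →
    disjB (spanList exT₂ S) (spanList exT₂ (Finset.range 6 \ S)) = true →
    (edgeB exT₁ exT₂ S (Finset.range 6 \ S) = true ∧
     edgeB exT₁ exT₂ (Finset.range 6 \ S) S = true) := by decide

lemma sing_restrict : ∀ x ∈ Finset.range 6,
    BTree.restrictTo exT₁ {x} = some (.leaf x) ∧
    BTree.restrictTo exT₂ {x} = some (.leaf x) := by decide

lemma sing_lca : ∀ x ∈ Finset.range 6, ∀ y ∈ Finset.range 6, x ≠ y →
    ¬ (BTree.lcaPos exT₁ {x} <+: BTree.lcaPos exT₁ {y}) ∧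
    ¬ (BTree.lcaPos exT₂ {x} <+: BTree.lcaPos exT₂ {y}) := by decide

/-- The trivial singleton forest. -/
def comp6 : Fin 6 → BTree := fun i => .leaf i

lemma leafSet_comp6 (i : Fin 6) : (comp6 i).leafSet = {(i : ℕ)} := by
  simp [comp6, leafSet, leafList]

lemma haaf6 : IsAAF ![exT₁, exT₂] 6 comp6 := by
  have hmem : ∀ i : Fin 6, (i : ℕ) ∈ Finset.range 6 := fun i => Finset.mem_range.mpr i.isLt
  have hlca : ∀ a : Fin 2, ∀ i j : Fin 6, i ≠ j →
      ¬ (BTree.lcaPos (![exT₁, exT₂] a) {(i : ℕ)} <+: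
         BTree.lcaPos (![exT₁, exT₂] a) {(j : ℕ)}) := by
    intro a i j hij
    have hne : (i : ℕ) ≠ (j : ℕ) := fun h => hij (Fin.ext h)
    fin_cases a
    · exact (sing_lca _ (hmem i) _ (hmem j) hne).1
    · exact (sing_lca _ (hmem i) _ (hmem j) hne).2
  have hedge : ∀ i j : Fin 6, ¬ inhEdge ![exT₁, exT₂] comp6 i j := by
    rintro i j ⟨hij, a, hpre⟩
    rw [leafSet_comp6, leafSet_comp6] at hpre
    exact hlca a i j hij hpre
  refine ⟨⟨?_, ?_, ?_, ?_, ?_⟩, ?_⟩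
  · intro i; simp [comp6, leafList]
  · intro i j hij
    rw [leafSet_comp6, leafSet_comp6]
    simp only [Finset.disjoint_singleton]
    exact fun h => hij (Fin.ext h)
  · decide
  · intro a i
    refine ⟨.leaf (i : ℕ), ?_, rfl⟩
    rw [leafSet_comp6]
    fin_cases a
    · exact (sing_restrict _ (hmem i)).1
    · exact (sing_restrict _ (hmem i)).2
  · intro a i j hij
    rw [Set.disjoint_left]
    rintro p ⟨h1, -⟩ ⟨h2, -⟩
    rw [leafSet_comp6] at h1
    rw [leafSet_comp6] at h2
    rcases List.prefix_or_prefix_of_prefix h1 h2 with h | h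
    · exact hlca a i j hij h
    · exact hlca a j i (Ne.symm hij) h
  · intro i h
    cases h with
    | single h => exact hedge _ _ h
    | tail _ h => exact hedge _ _ h

end OLA

open OLA in
/-- the Hamming OLA distance can be strictly smaller than the
reticulation number `|MAAF| - 1`: there are two trees on 6 leaves and an
ordering witnessing this. -/
theorem stmt17 :
    ∃ T₁ T₂ : BTree, T₁.IsPhylo 6 ∧ T₂.IsPhylo 6 ∧
      ∃ σ : Equiv.Perm ℕ, IsOrdering σ 6 ∧
        hamDist (fun a : Fin 2 => ola (![T₁, T₂] a) σ) 6 <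
          maafSize (![T₁, T₂]) 6 - 1 := by
  refine ⟨exT₁, exT₂, ⟨by decide, by decide⟩, ⟨by decide, by decide⟩, 1, ?_, ?_⟩
  · intro x hx; simpa using hx
  have hola : ∀ t i, ola t 1 i = BTree.olaEntry t i := by
    intro t i
    unfold ola
    rw [Equiv.Perm.coe_one, BTree.relabel_id]
  have hham : hamDist (fun a : Fin 2 => ola (![exT₁, exT₂] a) 1) 6 = 1 := by
    have hfilt : ((Finset.Icc 1 5).filter
        (fun i => ∃ a b : Fin 2, ola (![exT₁, exT₂] a) 1 i ≠ ola (![exT₁, exT₂] b) 1 i))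
          = {4} := by
      ext i
      simp only [Finset.mem_filter, Finset.mem_Icc, Finset.mem_singleton]
      constructor
      · rintro ⟨⟨h1, h5⟩, a, b, hne⟩
        by_contra hi
        apply hne
        rw [hola, hola]
        have key : ∀ c : Fin 2, BTree.olaEntry (![exT₁, exT₂] c) i
            = BTree.olaEntry exT₁ i := by
          intro c
          fin_cases c
          · rfl
          · show BTree.olaEntry exT₂ i = BTree.olaEntry exT₁ i
            interval_cases i
            · decide
            · decide
            · decide
            · exact absurd rfl hi
            · decide
        rw [key a, key b]
      · rintro rfl
        refine ⟨by norm_num, 0, 1, ?_⟩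
        rw [hola, hola]
        show BTree.olaEntry exT₁ 4 ≠ BTree.olaEntry exT₂ 4
        decide
    have h4 : ((Finset.Icc 1 5).filter
        (fun i => ∃ a b : Fin 2, ola (![exT₁, exT₂] a) 1 i ≠ ola (![exT₁, exT₂] b) 1 i)).card
          = 1 := by
      rw [hfilt]
      rfl
    unfold hamDist
    simp only [Finset.filter_congr_decidable]
    rw [show (6 : ℕ) - 1 = 5 from rfl]
    convert h4 using 2
  have hno : ∀ f : ℕ, f < 3 → ¬ ∃ comp : Fin f → BTree, IsAAF ![exT₁, exT₂] 6 comp := by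
    rintro f hf ⟨comp, ⟨⟨hnodup, hdisj, hunion, hiso, hspan⟩, hacyc⟩⟩
    interval_cases f
    · -- f = 0
      have h0 : (0 : ℕ) ∈ Finset.range 6 := by decide
      rw [← hunion, Finset.mem_biUnion] at h0
      obtain ⟨i, -, -⟩ := h0
      exact i.elim0
    · -- f = 1
      have hS : (comp 0).leafSet = Finset.range 6 := by
        ext x
        rw [← hunion, Finset.mem_biUnion]
        constructor
        · intro hx; exact ⟨0, Finset.mem_univ _, hx⟩
        · rintro ⟨i, -, hx⟩; rwa [Subsingleton.elim i 0] at hx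
      obtain ⟨c₁, e₁, q₁⟩ := hiso 0 0
      obtain ⟨c₂, e₂, q₂⟩ := hiso 1 0
      simp only [Matrix.cons_val_zero] at e₁
      simp only [Matrix.cons_val_one, Matrix.head_cons, Matrix.cons_val_zero] at e₂
      rw [hS] at e₁ e₂
      have r₁ : BTree.restrictTo exT₁ (Finset.range 6) = some exT₁ := by decide
      have r₂ : BTree.restrictTo exT₂ (Finset.range 6) = some exT₂ := by decide
      rw [r₁] at e₁; rw [r₂] at e₂
      obtain rfl : exT₁ = c₁ := Option.some.inj e₁
      obtain rfl : exT₂ = c₂ := Option.some.inj e₂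
      have : BTree.clustersF exT₁ = BTree.clustersF exT₂ :=
        BTree.clustersF_eq_of_clusters (q₁.trans q₂.symm)
      exact absurd this (by decide)
    · -- f = 2
      have h01 : (0 : Fin 2) ≠ 1 := by decide
      have hunion' : (comp 0).leafSet ∪ (comp 1).leafSet = Finset.range 6 := by
        ext x
        rw [← hunion, Finset.mem_biUnion, Finset.mem_union]
        constructor
        · rintro (hx | hx)
          exacts [⟨0, Finset.mem_univ _, hx⟩, ⟨1, Finset.mem_univ _, hx⟩]
        · rintro ⟨i, -, hx⟩
          fin_cases i
          exacts [Or.inl hx, Or.inr hx]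
      have hd : Disjoint (comp 0).leafSet (comp 1).leafSet := hdisj 0 1 h01
      have hc : (comp 1).leafSet = Finset.range 6 \ (comp 0).leafSet := by
        rw [← hunion']
        ext x
        simp only [Finset.mem_sdiff, Finset.mem_union]
        constructor
        · intro hx
          exact ⟨Or.inr hx, fun hx0 => Finset.disjoint_left.mp hd hx0 hx⟩
        · rintro ⟨hx | hx, hx0⟩
          · exact absurd hx hx0
          · exact hx
      have hpow : (comp 0).leafSet ∈ (Finset.range 6).powerset :=
        Finset.mem_powerset.mpr (hunion' ▸ Finset.subset_union_left)
      obtain ⟨c₁, e₁, q₁⟩ := hiso 0 0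
      obtain ⟨c₂, e₂, q₂⟩ := hiso 1 0
      obtain ⟨d₁, f₁, p₁⟩ := hiso 0 1
      obtain ⟨d₂, f₂, p₂⟩ := hiso 1 1
      simp only [Matrix.cons_val_zero] at e₁ f₁
      simp only [Matrix.cons_val_one, Matrix.head_cons, Matrix.cons_val_zero] at e₂ f₂
      have g₀ : BTree.goodB exT₁ exT₂ (comp 0).leafSet = true := by
        unfold BTree.goodB
        rw [e₁, e₂]
        exact decide_eq_true (BTree.clustersF_eq_of_clusters (q₁.trans q₂.symm))
      have g₁ : BTree.goodB exT₁ exT₂ (Finset.range 6 \ (comp 0).leafSet) = true := by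
        rw [← hc]
        unfold BTree.goodB
        rw [f₁, f₂]
        exact decide_eq_true (BTree.clustersF_eq_of_clusters (p₁.trans p₂.symm))
      have hsp₁ : BTree.disjB (BTree.spanList exT₁ (comp 0).leafSet)
          (BTree.spanList exT₁ (Finset.range 6 \ (comp 0).leafSet)) = true := by
        rw [← hc]
        have := hspan 0 0 1 h01
        simp only [Matrix.cons_val_zero] at this
        exact BTree.disjB_of_disjoint this
      have hsp₂ : BTree.disjB (BTree.spanList exT₂ (comp 0).leafSet)
          (BTree.spanList exT₂ (Finset.range 6 \ (comp 0).leafSet)) = true := by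
        rw [← hc]
        have := hspan 1 0 1 h01
        simp only [Matrix.cons_val_one, Matrix.head_cons] at this
        exact BTree.disjB_of_disjoint this
      obtain ⟨he₁, he₂⟩ := master _ hpow g₀ g₁ hsp₁ hsp₂
      have edge01 : inhEdge ![exT₁, exT₂] comp 0 1 := by
        refine ⟨h01, ?_⟩
        rw [hc]
        exact BTree.exists_of_edgeB he₁
      have edge10 : inhEdge ![exT₁, exT₂] comp 1 0 := by
        refine ⟨h01.symm, ?_⟩
        rw [hc]
        exact BTree.exists_of_edgeB he₂
      exact hacyc 0 (Relation.TransGen.head edge01 (Relation.TransGen.single edge10))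
  have hnonempty : {f | ∃ comp : Fin f → BTree, IsAAF ![exT₁, exT₂] 6 comp}.Nonempty :=
    ⟨6, comp6, haaf6⟩
  have hmem : maafSize ![exT₁, exT₂] 6 ∈
      {f | ∃ comp : Fin f → BTree, IsAAF ![exT₁, exT₂] 6 comp} := Nat.sInf_mem hnonempty
  have h3 : 3 ≤ maafSize ![exT₁, exT₂] 6 := by
    by_contra h
    push_neg at h
    exact hno _ h hmem
  rw [hham]
  omega
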